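/- Every 3-colourable finite simple graph is semi-transitive; that is, every graph admitting a proper coloring with 3 colors admits a semi-transitive orientation. -/

import Mathlib

/-- `D` is an orientation of the simple graph `G`: every edge gets exactly one direction. -/
def SimpleGraph.IsOrientation {V : Type*} (G : SimpleGraph V) (D : V → V → Prop) : Prop :=
  (∀ u v, G.Adj u v ↔ D u v ∨ D v u) ∧ ∀ u v, D u v → ¬ D v u

/-- A digraph (given as a relation) is acyclic: no directed cycle. -/
def DigraphAcyclic {V : Type*} (D : V → V → Prop) : Prop :=
  ∀ v, ¬ Relation.TransGen D v v

/-- `D` is a semi-transitive orientation of `G`: it is an acyclic orientation such that for every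
directed path `p 0 → p 1 → ⋯ → p k`, either `p 0` and `p k` are non-adjacent in `G`, or
`p i → p j` is an arc for all `i < j`. -/
def SimpleGraph.IsSemitransitiveOrientation {V : Type*} (G : SimpleGraph V)
    (D : V → V → Prop) : Prop :=
  G.IsOrientation D ∧ DigraphAcyclic D ∧
    ∀ (k : ℕ) (p : Fin (k + 1) → V),
      (∀ i : Fin k, D (p i.castSucc) (p i.succ)) →
      (¬ G.Adj (p 0) (p (Fin.last k)) ∨ ∀ i j : Fin (k + 1), i < j → D (p i) (p j))

/-- A graph is semi-transitive if it admits a semi-transitive orientation. -/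
def SimpleGraph.Semitransitive {V : Type*} (G : SimpleGraph V) : Prop :=
  ∃ D : V → V → Prop, G.IsSemitransitiveOrientation D

/-- Every 3-colourable finite graph is semi-transitive. -/
theorem colorable_three_semitransitive (V : Type) [Fintype V] (G : SimpleGraph V)
    (h : G.Colorable 3) : G.Semitransitive := by
  obtain ⟨c⟩ := h
  refine ⟨fun u v => G.Adj u v ∧ c u < c v, ⟨fun u v => ?_, fun u v huv hvu => ?_⟩, ?_, ?_⟩
  · constructor
    · intro hadj
      rcases lt_or_gt_of_ne (c.valid hadj) with h1 | h1
      · exact Or.inl ⟨hadj, h1⟩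
      · exact Or.inr ⟨hadj.symm, h1⟩
    · rintro (⟨h1, _⟩ | ⟨h1, _⟩)
      · exact h1
      · exact h1.symm
  · exact absurd (huv.2.trans hvu.2) (lt_irrefl _)
  · intro v hv
    have key : ∀ a b, Relation.TransGen (fun u v => G.Adj u v ∧ c u < c v) a b → c a < c b := by
      intro a b hab
      induction hab with
      | single h => exact h.2
      | tail _ h ih => exact ih.trans h.2
    exact lt_irrefl _ (key v v hv)
  · intro k p hp
    have hsm : StrictMono (fun i : Fin (k+1) => c (p i)) := by
      rw [Fin.strictMono_iff_lt_succ]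
      intro i
      exact (hp i).2
    have hk : k ≤ 2 := by
      have := Fintype.card_le_of_injective _ hsm.injective
      simp at this
      omega
    by_cases hadj : G.Adj (p 0) (p (Fin.last k))
    · right
      intro i j hij
      refine ⟨?_, hsm hij⟩
      interval_cases k
      · exact absurd hij (by omega)
      · fin_cases i <;> fin_cases j <;> first
          | exact absurd hij (by decide)
          | exact (hp 0).1
          | simpa using hadj
      · fin_cases i <;> fin_cases j <;> first
          | exact absurd hij (by decide)
          | exact (hp 0).1
          | exact (hp 1).1
          | simpa using hadj
    · exact Or.inl hadj
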